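/- Fix r > 1, reals β > α ≥ 1, a prime p, and a nonnegative integer a_0 such that σ_{-r}(p^{a+1})·α ≤ σ_{-r}(p^a)·β for all integers a ≥ a_0. Then the union over a ∈ ℕ ∪ {∞} with a ≥ a_0 of σ_{-r}(p^a)·[α, β] equals the single interval [σ_{-r}(p^{a_0})·α, (1/(1 - p^{-r}))·β]. -/

import Mathlib

noncomputable def sigma' (r : ℝ) (n : ℕ) : ℝ := ∑ d ∈ n.divisors, (d : ℝ) ^ (-r)

lemma sigma'_prime_pow' (r : ℝ) (p : ℕ) (hp : p.Prime) (a : ℕ) :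
    sigma' r (p ^ a) = ∑ i ∈ Finset.range (a + 1), ((p : ℝ) ^ (-r)) ^ i := by
  unfold sigma'
  rw [Nat.sum_divisors_prime_pow hp]
  refine Finset.sum_congr rfl fun i _ => ?_
  have hx : (0:ℝ) ≤ p := Nat.cast_nonneg p
  push_cast
  rw [← Real.rpow_natCast (p:ℝ) i, ← Real.rpow_mul hx, mul_comm (i:ℝ) (-r),
    Real.rpow_mul hx, Real.rpow_natCast]

theorem stmt13 (r α β : ℝ) (hr : 1 < r) (hα : 1 ≤ α) (hαβ : α < β)
    (p : ℕ) (hp : p.Prime) (a0 : ℕ)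
    (h : ∀ a ≥ a0, sigma' r (p ^ (a + 1)) * α ≤ sigma' r (p ^ a) * β) :
    ((⋃ a : ℕ, ⋃ (_ : a0 ≤ a), Set.Icc (sigma' r (p ^ a) * α) (sigma' r (p ^ a) * β)) ∪
        Set.Icc ((1 - (p : ℝ) ^ (-r))⁻¹ * α) ((1 - (p : ℝ) ^ (-r))⁻¹ * β)) =
      Set.Icc (sigma' r (p ^ a0) * α) ((1 - (p : ℝ) ^ (-r))⁻¹ * β) := by
  set x : ℝ := (p : ℝ) ^ (-r) with hxdef
  have hp1 : (1 : ℝ) < p := by exact_mod_cast hp.one_lt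
  have hx0 : 0 < x := Real.rpow_pos_of_pos (by linarith) _
  have hx1 : x < 1 := Real.rpow_lt_one_of_one_lt_of_neg hp1 (by linarith)
  set L : ℝ := (1 - x)⁻¹ with hLdef
  have hL0 : 0 < L := inv_pos.2 (by linarith)
  have hsum : HasSum (fun i : ℕ => x ^ i) L :=
    hasSum_geometric_of_lt_one hx0.le hx1
  have hs : ∀ a : ℕ, sigma' r (p ^ a) = ∑ i ∈ Finset.range (a + 1), x ^ i :=
    fun a => sigma'_prime_pow' r p hp a
  have hmono : ∀ a b : ℕ, a ≤ b → sigma' r (p ^ a) ≤ sigma' r (p ^ b) := by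
    intro a b hab
    rw [hs, hs]
    exact Finset.sum_le_sum_of_subset_of_nonneg
      (Finset.range_subset_range.2 (by omega)) (fun i _ _ => by positivity)
  have hleL : ∀ a : ℕ, sigma' r (p ^ a) ≤ L := by
    intro a
    rw [hs]
    exact sum_le_hasSum _ (fun i _ => by positivity) hsum
  have hpos : ∀ a : ℕ, 0 < sigma' r (p ^ a) := by
    intro a
    rw [hs]
    exact Finset.sum_pos (fun i _ => by positivity) (by simp)
  have hα0 : 0 < α := by linarith
  have hβ0 : 0 < β := by linarith
  have htend : Filter.Tendsto (fun a : ℕ => sigma' r (p ^ a)) Filter.atTop (nhds L) := by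
    have h1 : Filter.Tendsto (fun n : ℕ => ∑ i ∈ Finset.range n, x ^ i)
        Filter.atTop (nhds L) := hsum.tendsto_sum_nat
    have h2 := h1.comp (Filter.tendsto_add_atTop_nat 1)
    simpa [Function.comp_def, hs] using h2
  ext y
  simp only [Set.mem_union, Set.mem_iUnion, Set.mem_Icc]
  constructor
  · rintro (⟨a, ha, h1, h2⟩ | ⟨h1, h2⟩)
    · exact ⟨le_trans (by nlinarith [hmono a0 a ha]) h1,
        le_trans h2 (by nlinarith [hleL a])⟩
    · exact ⟨le_trans (by nlinarith [hleL a0]) h1, h2⟩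
  · rintro ⟨h1, h2⟩
    by_cases hc : L * α ≤ y
    · exact Or.inr ⟨hc, h2⟩
    push_neg at hc
    left
    by_contra hno
    push_neg at hno
    have key : ∀ a, a0 ≤ a → sigma' r (p ^ a) * α ≤ y := by
      intro a ha
      induction a, ha using Nat.le_induction with
      | base => exact h1
      | succ n hn ih =>
        have := hno n hn ih
        exact le_trans (h n hn) this.le
    have : L * α ≤ y := by
      refine le_of_tendsto (htend.mul_const α) ?_
      filter_upwards [Filter.eventually_ge_atTop a0] with a ha using key a ha
    linarith
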